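/- Let a = ⟨λ₁,…,λ_k⟩ be as above, and for 0 ≤ t ≤ j let L(j,t) be defined by L(j,j) = (a_{j+1} − a_j)/(Λ−1) and L(j,t) = L(j,t+1) − (Λ_{j-t} − 1)·(a_{t+1} − a_t)/(Λ−1) for 0 ≤ t < j. Then for all 0 ≤ t ≤ j, (Λ−1)·L(j,t) = a_{j+1} + (Λ_{j-t} − 1)·a_t − Σ_{i=1}^{j-t} λ_i a_{j+1-i}. -/

import Mathlib

/-- `Λ_j = λ₁ + ⋯ + λ_j`. -/
def Lam (lam : ℕ → ℕ) (j : ℕ) : ℕ := ∑ i ∈ Finset.Icc 1 j, lam i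

/-- with `L(j,j) = (a_{j+1} - a_j)/(Λ-1)` and
`L(j,t) = L(j,t+1) - (Λ_{j-t} - 1)(a_{t+1} - a_t)/(Λ-1)` for `t < j`, we have
`(Λ-1) L(j,t) = a_{j+1} + (Λ_{j-t} - 1) a_t - ∑_{i=1}^{j-t} λ_i a_{j+1-i}`
for all `0 ≤ t ≤ j`. -/
theorem stmt8 (k : ℕ) (lam : ℕ → ℕ) (hk : 1 ≤ k)
    (h1 : 1 ≤ lam 1) (hkpos : 1 ≤ lam k) (hzero : ∀ i, k < i → lam i = 0)
    (hΛ : 2 ≤ Lam lam k)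
    (a : ℤ → ℚ)
    (ha0 : ∀ i : ℤ, i ≤ 0 → a i = 1)
    (harec : ∀ n : ℤ, 1 ≤ n → a n = ∑ i ∈ Finset.Icc 1 k, (lam i : ℚ) * a (n - i))
    (L : ℕ → ℕ → ℚ)
    (hLjj : ∀ j : ℕ, L j j = (a (j + 1) - a j) / ((Lam lam k : ℚ) - 1))
    (hLrec : ∀ j t : ℕ, t < j →
      L j t = L j (t + 1) -
        ((Lam lam (j - t) : ℚ) - 1) * (a (t + 1) - a t) / ((Lam lam k : ℚ) - 1)) :
    ∀ j t : ℕ, t ≤ j →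
      ((Lam lam k : ℚ) - 1) * L j t
        = a (j + 1) + ((Lam lam (j - t) : ℚ) - 1) * a t
          - ∑ i ∈ Finset.Icc 1 (j - t), (lam i : ℚ) * a ((j : ℤ) + 1 - i) := by
  have hΛQ : ((Lam lam k : ℚ) - 1) ≠ 0 := by
    have : (2:ℚ) ≤ (Lam lam k : ℚ) := by exact_mod_cast hΛ
    linarith
  suffices H : ∀ d j t : ℕ, t + d = j →
      ((Lam lam k : ℚ) - 1) * L j t
        = a (j + 1) + ((Lam lam (j - t) : ℚ) - 1) * a t
          - ∑ i ∈ Finset.Icc 1 (j - t), (lam i : ℚ) * a ((j : ℤ) + 1 - i) by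
    intro j t ht
    exact H (j - t) j t (by omega)
  intro d
  induction d with
  | zero =>
    intro j t ht
    have hjt : t = j := by omega
    subst hjt
    have h0 : t - t = 0 := by omega
    rw [h0, hLjj, mul_div_cancel₀ _ hΛQ]
    simp [Lam]
    ring
  | succ d ih =>
    intro j t ht
    have htlt : t < j := by omega
    have hih := ih j (t+1) (by omega)
    have h1 : j - (t+1) = d := by omega
    have h2 : j - t = d + 1 := by omega
    rw [h1] at hih
    push_cast at hih
    have hL : Lam lam (d+1) = Lam lam d + lam (d+1) :=
      Finset.sum_Icc_succ_top (by omega) _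
    have hsum : ∑ i ∈ Finset.Icc 1 (d+1), (lam i : ℚ) * a ((j : ℤ) + 1 - i)
        = (∑ i ∈ Finset.Icc 1 d, (lam i : ℚ) * a ((j : ℤ) + 1 - i))
          + (lam (d+1) : ℚ) * a ((j : ℤ) + 1 - (d+1)) :=
      Finset.sum_Icc_succ_top (by omega) _
    have hidx : (j : ℤ) + 1 - ((d:ℤ)+1) = (t : ℤ) + 1 := by
      have : (t : ℤ) + (d + 1) = j := by exact_mod_cast ht
      omega
    rw [h2, hLrec j t htlt, h2, mul_sub, hih, hsum, hL]
    push_cast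
    rw [hidx]
    field_simp
    ring
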